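/- For every prime p and nonzero integer a₁ with p ∤ a₁, the sum S₁(s; a) defined by S₁(s;a) = Σ_{j₁≥1, j₁>2j₂, j₂≥0} p^{(j₁+j₂)(1−s)} I(j₁,j₂) + Σ_{j₁≥1, j₂<0} p^{−j₁s+j₁+j₂} I(j₁,j₂), where I(j₁,j₂) = ∫_{U_p²} e(a₁x/p^{j₁} + a₂y/p^{j₂}) dx dy, equals −p^{−s} for Re(s) > 3/2. -/

import Mathlib

open MeasureTheory

set_option linter.unusedSectionVars false
namespace S1aux2
variable {p : ℕ} [hp : Fact p.Prime]

lemma psi_eq_of_close (ψ : AddChar ℚ_[p] ℂ) (hψ1 : ∀ x : ℚ_[p], ‖x‖ ≤ 1 → ψ x = 1)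
    {x y : ℚ_[p]} (h : ‖y - x‖ ≤ 1) : ψ y = ψ x := by
  have : y = x + (y - x) := by ring
  rw [this, AddChar.map_add_eq_mul, hψ1 _ h, mul_one]

lemma psi_continuous (ψ : AddChar ℚ_[p] ℂ) (hψ1 : ∀ x : ℚ_[p], ‖x‖ ≤ 1 → ψ x = 1) :
    Continuous ψ := by
  rw [continuous_iff_continuousAt]
  intro x
  have h : ∀ᶠ y in nhds x, ψ y = ψ x := by
    filter_upwards [Metric.ball_mem_nhds x one_pos] with y hy
    exact psi_eq_of_close ψ hψ1 (le_of_lt (by simpa [dist_eq_norm] using hy))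
  exact (continuousAt_const (y := ψ x)).congr (h.mono fun y hy => hy.symm)

lemma psi_norm_one (ψ : AddChar ℚ_[p] ℂ) (hψ1 : ∀ x : ℚ_[p], ‖x‖ ≤ 1 → ψ x = 1)
    (x : ℚ_[p]) : ‖ψ x‖ = 1 := by
  have hp1 : (1 : ℝ) < p := by exact_mod_cast hp.out.one_lt
  obtain ⟨n, hn⟩ := pow_unbounded_of_one_lt ‖x‖ hp1
  have hle : ‖(p : ℚ_[p]) ^ n * x‖ ≤ 1 := by
    rw [norm_mul, Padic.norm_p_pow]
    rcases eq_or_ne x 0 with rfl | hx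
    · simp
    · have hxpos : 0 < ‖x‖ := norm_pos_iff.2 hx
      have : ‖x‖ ≤ (p:ℝ) ^ n := le_of_lt hn
      calc (p:ℝ) ^ (-n : ℤ) * ‖x‖ ≤ (p:ℝ) ^ (-n : ℤ) * (p:ℝ)^n := by
            apply mul_le_mul_of_nonneg_left this (by positivity)
        _ = 1 := by
            rw [← zpow_natCast (p:ℝ) n, ← zpow_add₀ (by positivity : (p:ℝ) ≠ 0)]
            simp
  have hpow : ψ x ^ (p ^ n) = 1 := by
    rw [← AddChar.map_nsmul_eq_pow, nsmul_eq_mul]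
    apply hψ1
    push_cast
    exact hle
  have : ‖ψ x‖ ^ (p ^ n) = 1 := by
    rw [← norm_pow, hpow, norm_one]
  have hm : p ^ n ≠ 0 := pow_ne_zero _ hp.out.pos.ne'
  rcases lt_trichotomy ‖ψ x‖ 1 with h | h | h
  · exact absurd this (by simpa using (pow_lt_one₀ (norm_nonneg _) h hm).ne)
  · exact h
  · exact absurd this (by simpa using (one_lt_pow₀ h hm).ne')

variable [MeasurableSpace ℚ_[p]] [BorelSpace ℚ_[p]]

lemma ball_meas (t : ℝ) : MeasurableSet {x : ℚ_[p] | ‖x‖ ≤ t} :=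
  (isClosed_le continuous_norm continuous_const).measurableSet

lemma sphere_meas : MeasurableSet {x : ℚ_[p] | ‖x‖ = 1} :=
  (isClosed_eq continuous_norm continuous_const).measurableSet

lemma integral_ball_zero (μ : Measure ℚ_[p]) [μ.IsAddHaarMeasure]
    (ψ : AddChar ℚ_[p] ℂ) (c : ℚ_[p]) (t : ℝ) (x₀ : ℚ_[p])
    (h1 : ‖x₀‖ ≤ t) (h2 : ψ (c * x₀) ≠ 1) :
    ∫ x in {x : ℚ_[p] | ‖x‖ ≤ t}, (ψ (c * x) : ℂ) ∂μ = 0 := by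
  set B : Set ℚ_[p] := {x | ‖x‖ ≤ t} with hB
  have hBm : MeasurableSet B := ball_meas t
  have hmem : ∀ x : ℚ_[p], x + x₀ ∈ B ↔ x ∈ B := by
    intro x
    constructor
    · intro h
      have : ‖x‖ = ‖(x + x₀) + (-x₀)‖ := by ring_nf
      have h3 : ‖(x + x₀) + (-x₀)‖ ≤ max ‖x + x₀‖ ‖(-x₀)‖ := Padic.nonarchimedean _ _
      simp only [norm_neg] at h3
      exact le_trans (this ▸ h3) (max_le h h1)
    · intro h
      have h3 : ‖x + x₀‖ ≤ max ‖x‖ ‖x₀‖ := Padic.nonarchimedean _ _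
      exact le_trans h3 (max_le h h1)
  have key : ∫ x, B.indicator (fun x => (ψ (c * x) : ℂ)) (x + x₀) ∂μ
      = ∫ x, B.indicator (fun x => (ψ (c * x) : ℂ)) x ∂μ :=
    integral_add_right_eq_self _ x₀
  have hpt : ∀ x, B.indicator (fun x => (ψ (c * x) : ℂ)) (x + x₀)
      = ψ (c * x₀) * B.indicator (fun x => (ψ (c * x) : ℂ)) x := by
    intro x
    by_cases hx : x ∈ B
    · rw [Set.indicator_of_mem ((hmem x).2 hx), Set.indicator_of_mem hx]
      have : c * (x + x₀) = c * x + c * x₀ := by ring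
      rw [this, AddChar.map_add_eq_mul]; ring
    · rw [Set.indicator_of_notMem (fun h => hx ((hmem x).1 h)),
        Set.indicator_of_notMem hx, mul_zero]
  simp_rw [hpt, integral_const_mul] at key
  have hz : (ψ (c * x₀) - 1) * ∫ x, B.indicator (fun x => (ψ (c * x) : ℂ)) x ∂μ = 0 := by
    rw [sub_mul, key, one_mul, sub_self]
  rw [← integral_indicator hBm]
  rcases mul_eq_zero.1 hz with h | h
  · exact absurd (sub_eq_zero.1 h) h2
  · exact h

lemma measure_ball_inv (μ : Measure ℚ_[p]) [μ.IsAddHaarMeasure]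
    (hμ : μ {x : ℚ_[p] | ‖x‖ ≤ 1} = 1) :
    μ {x : ℚ_[p] | ‖x‖ ≤ (p : ℝ)⁻¹} = (p : ENNReal)⁻¹ := by
  set Bp : Set ℚ_[p] := {x | ‖x‖ ≤ (p : ℝ)⁻¹} with hBp
  have hBm : MeasurableSet Bp := ball_meas _
  set A : Fin p → Set ℚ_[p] := fun i => (fun x => x + (-(i : ℚ_[p]))) ⁻¹' Bp with hA
  have hAmem : ∀ (i : Fin p) (x : ℚ_[p]), x ∈ A i ↔ ‖x - (i : ℚ_[p])‖ ≤ (p : ℝ)⁻¹ := by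
    intro i x
    simp [hA, hBp, sub_eq_add_neg]
  have hAm : ∀ i, MeasurableSet (A i) :=
    fun i => hBm.preimage (measurable_add_const _)
  have hcover : {x : ℚ_[p] | ‖x‖ ≤ 1} = ⋃ i, A i := by
    apply Set.Subset.antisymm
    · intro x hx
      set z : ℤ_[p] := ⟨x, hx⟩ with hz
      have hk := PadicInt.appr_lt z 1
      rw [pow_one] at hk
      have hsp := PadicInt.appr_spec 1 z
      have hnorm : ‖z - (z.appr 1 : ℤ_[p])‖ ≤ (p : ℝ) ^ (-1 : ℤ) :=
        (PadicInt.norm_le_pow_iff_mem_span_pow _ 1).2 hsp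
      refine Set.mem_iUnion.2 ⟨⟨z.appr 1, hk⟩, ?_⟩
      rw [hAmem]
      have : ‖x - ((z.appr 1 : ℕ) : ℚ_[p])‖ = ‖z - (z.appr 1 : ℤ_[p])‖ := by
        rw [← PadicInt.padic_norm_e_of_padicInt]
        push_cast
        rfl
      calc ‖x - ((⟨z.appr 1, hk⟩ : Fin p) : ℚ_[p])‖
          = ‖z - (z.appr 1 : ℤ_[p])‖ := by rw [← this]
        _ ≤ (p : ℝ) ^ (-1 : ℤ) := hnorm
        _ = (p : ℝ)⁻¹ := by simp
    · intro x hx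
      obtain ⟨i, hi⟩ := Set.mem_iUnion.1 hx
      rw [hAmem] at hi
      have h1 : ‖((i : ℕ) : ℚ_[p])‖ ≤ 1 := by
        have := Padic.norm_int_le_one (p := p) ((i : ℕ) : ℤ)
        push_cast at this
        exact this
      have h2 : ‖x‖ ≤ max ‖x - (i : ℚ_[p])‖ ‖((i : ℕ) : ℚ_[p])‖ := by
        have := Padic.nonarchimedean (x - (i : ℚ_[p])) ((i : ℕ) : ℚ_[p])
        simpa using this
      have hpinv : (p : ℝ)⁻¹ ≤ 1 := by
        rw [inv_le_one_iff₀]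
        right
        exact_mod_cast hp.out.one_le
      exact le_trans h2 (max_le (le_trans hi hpinv) h1)
  have hdisj : Pairwise (Function.onFun Disjoint A) := by
    intro i j hij
    rw [Function.onFun, Set.disjoint_left]
    intro x hxi hxj
    rw [hAmem] at hxi hxj
    have hsub : ‖((i : ℚ_[p]) - (j : ℚ_[p]))‖ ≤ (p : ℝ)⁻¹ := by
      have h3 : (i : ℚ_[p]) - (j : ℚ_[p]) = (x - (j : ℚ_[p])) + (-(x - (i : ℚ_[p]))) := by ring
      rw [h3]
      refine le_trans (Padic.nonarchimedean _ _) ?_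
      rw [norm_neg]
      exact max_le hxj hxi
    have hlt1 : ‖(((i : ℤ) - (j : ℤ) : ℤ) : ℚ_[p])‖ < 1 := by
      push_cast
      refine lt_of_le_of_lt hsub ?_
      rw [inv_lt_one_iff₀]
      right
      exact_mod_cast hp.out.one_lt
    have hdvd : (p : ℤ) ∣ ((i : ℤ) - (j : ℤ)) := (Padic.norm_intCast_lt_one_iff).1 hlt1
    have : ((i : ℤ) - (j : ℤ)) = 0 := by
      apply Int.eq_zero_of_abs_lt_dvd hdvd
      have hi2 := i.2
      have hj2 := j.2
      rw [abs_lt]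
      omega
    exact hij (Fin.ext (by omega))
  have hmeasA : ∀ i, μ (A i) = μ Bp := fun i => measure_preimage_add_right μ _ _
  have hsum : μ {x : ℚ_[p] | ‖x‖ ≤ 1} = ∑' i : Fin p, μ (A i) := by
    rw [hcover, measure_iUnion hdisj hAm]
  rw [hμ] at hsum
  simp only [hmeasA, tsum_fintype, Finset.sum_const, Finset.card_univ, Fintype.card_fin,
    nsmul_eq_mul] at hsum
  have hp0 : (p : ENNReal) ≠ 0 := by exact_mod_cast hp.out.pos.ne'
  have hptop : (p : ENNReal) ≠ ⊤ := ENNReal.natCast_ne_top p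
  calc μ Bp = (p : ENNReal)⁻¹ * ((p : ENNReal) * μ Bp) := by
        rw [← mul_assoc, ENNReal.inv_mul_cancel hp0 hptop, one_mul]
    _ = (p : ENNReal)⁻¹ := by rw [← hsum, mul_one]

lemma sphere_eq_diff : {x : ℚ_[p] | ‖x‖ = 1}
      = {x : ℚ_[p] | ‖x‖ ≤ 1} \ {x : ℚ_[p] | ‖x‖ ≤ (p : ℝ)⁻¹} := by
    ext x
    simp only [Set.mem_setOf_eq, Set.mem_diff]
    constructor
    · intro h
      refine ⟨le_of_eq h, ?_⟩
      intro hc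
      rw [h] at hc
      have : (p : ℝ)⁻¹ < 1 := by
        rw [inv_lt_one_iff₀]
        right
        exact_mod_cast hp.out.one_lt
      linarith
    · rintro ⟨h1, h2⟩
      have hge : ¬ ‖x‖ < (p : ℝ) ^ ((-1 : ℤ) + 1) := by
        intro hlt
        apply h2
        have := (Padic.norm_le_pow_iff_norm_lt_pow_add_one x (-1)).2 hlt
        simpa [zpow_neg_one] using this
      push_neg at hge
      have h3 : (1 : ℝ) ≤ ‖x‖ := by simpa using hge
      linarith

lemma pinv_le_one : (p : ℝ)⁻¹ ≤ 1 := by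
  rw [inv_le_one_iff₀]
  right
  exact_mod_cast hp.out.one_le

lemma measure_sphere (μ : Measure ℚ_[p]) [μ.IsAddHaarMeasure]
    (hμ : μ {x : ℚ_[p] | ‖x‖ ≤ 1} = 1) :
    μ {x : ℚ_[p] | ‖x‖ = 1} = 1 - (p : ENNReal)⁻¹ := by
  have hpinv : (p : ℝ)⁻¹ ≤ 1 := pinv_le_one
  have hsub : {x : ℚ_[p] | ‖x‖ ≤ (p : ℝ)⁻¹} ⊆ {x : ℚ_[p] | ‖x‖ ≤ 1} :=
    fun x hx => le_trans hx hpinv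
  have hfin : μ {x : ℚ_[p] | ‖x‖ ≤ (p : ℝ)⁻¹} ≠ ⊤ := by
    rw [measure_ball_inv μ hμ]
    exact ENNReal.inv_ne_top.2 (by exact_mod_cast hp.out.pos.ne')
  rw [sphere_eq_diff, measure_diff hsub (ball_meas _).nullMeasurableSet hfin, hμ,
    measure_ball_inv μ hμ]

lemma exists_norm_p (ψ : AddChar ℚ_[p] ℂ) (hψ1 : ∀ x : ℚ_[p], ‖x‖ ≤ 1 → ψ x = 1)
    (hψ2 : ∃ x : ℚ_[p], ‖x‖ ≤ p ∧ ψ x ≠ 1) :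
    ∃ y : ℚ_[p], ‖y‖ = p ∧ ψ y ≠ 1 := by
  obtain ⟨y, hy1, hy2⟩ := hψ2
  refine ⟨y, ?_, hy2⟩
  have hgt : ¬ ‖y‖ ≤ 1 := fun h => hy2 (hψ1 y h)
  have hge : ¬ ‖y‖ < (p : ℝ) ^ ((0 : ℤ) + 1) := by
    intro h
    exact hgt (by simpa using (Padic.norm_le_pow_iff_norm_lt_pow_add_one y 0).2 h)
  push_neg at hge
  have hge2 : (p : ℝ) ≤ ‖y‖ := by simpa using hge
  exact le_antisymm hy1 hge2

variable (μ : Measure ℚ_[p]) [μ.IsAddHaarMeasure] (ψ : AddChar ℚ_[p] ℂ)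

lemma integrableOn_ball (hψ1 : ∀ x : ℚ_[p], ‖x‖ ≤ 1 → ψ x = 1) (c : ℚ_[p]) (t : ℝ) :
    IntegrableOn (fun x => (ψ (c * x) : ℂ)) {x : ℚ_[p] | ‖x‖ ≤ t} μ := by
  have hcomp : IsCompact {x : ℚ_[p] | ‖x‖ ≤ t} := by
    have : {x : ℚ_[p] | ‖x‖ ≤ t} = Metric.closedBall 0 t := by
      ext x; simp [Metric.mem_closedBall, dist_zero_right]
    rw [this]
    exact isCompact_closedBall 0 t
  exact ContinuousOn.integrableOn_compact hcomp
    (((psi_continuous (p := p) ψ hψ1).comp (continuous_const.mul continuous_id)).continuousOn)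

lemma integral_ball_const (hψ1 : ∀ x : ℚ_[p], ‖x‖ ≤ 1 → ψ x = 1)
    (hμ : μ {x : ℚ_[p] | ‖x‖ ≤ 1} = 1) (c : ℚ_[p]) (hc : ‖c‖ = p) :
    ∫ x in {x : ℚ_[p] | ‖x‖ ≤ (p : ℝ)⁻¹}, (ψ (c * x) : ℂ) ∂μ = (p : ℂ)⁻¹ := by
  have hcongr : ∀ x ∈ {x : ℚ_[p] | ‖x‖ ≤ (p : ℝ)⁻¹}, (ψ (c * x) : ℂ) = 1 := by
    intro x hx
    apply hψ1
    rw [norm_mul, hc]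
    calc (p : ℝ) * ‖x‖ ≤ (p : ℝ) * (p : ℝ)⁻¹ := by
          apply mul_le_mul_of_nonneg_left hx (by positivity)
      _ = 1 := by
          exact mul_inv_cancel₀ (by exact_mod_cast hp.out.ne_zero)
    
  rw [setIntegral_congr_fun (ball_meas _) hcongr, setIntegral_const,
    measureReal_def, measure_ball_inv μ hμ]
  have : ((p : ENNReal)⁻¹).toReal = (p : ℝ)⁻¹ := by
    rw [ENNReal.toReal_inv]
    simp
  rw [this, Complex.real_smul, mul_one]
  push_cast
  rfl

lemma integral_sphere_small (hψ1 : ∀ x : ℚ_[p], ‖x‖ ≤ 1 → ψ x = 1)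
    (hμ : μ {x : ℚ_[p] | ‖x‖ ≤ 1} = 1) (c : ℚ_[p]) (hc : ‖c‖ ≤ 1) :
    ∫ x in {x : ℚ_[p] | ‖x‖ = 1}, (ψ (c * x) : ℂ) ∂μ = 1 - (p : ℂ)⁻¹ := by
  have hcongr : ∀ x ∈ {x : ℚ_[p] | ‖x‖ = 1}, (ψ (c * x) : ℂ) = 1 := by
    intro x hx
    apply hψ1
    rw [norm_mul, hx, mul_one]
    exact hc
  rw [setIntegral_congr_fun sphere_meas hcongr, setIntegral_const, measureReal_def, measure_sphere μ hμ]
  have h1 : ((1 : ENNReal) - (p : ENNReal)⁻¹).toReal = 1 - (p : ℝ)⁻¹ := by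
    rw [ENNReal.toReal_sub_of_le (by
      rw [ENNReal.inv_le_one]
      exact_mod_cast Nat.one_le_cast.2 hp.out.one_le) ENNReal.one_ne_top]
    simp [ENNReal.toReal_inv]
  rw [h1, Complex.real_smul, mul_one]
  push_cast
  ring

lemma integral_sphere_nontriv (hψ1 : ∀ x : ℚ_[p], ‖x‖ ≤ 1 → ψ x = 1)
    (hψ2 : ∃ x : ℚ_[p], ‖x‖ ≤ p ∧ ψ x ≠ 1)
    (hμ : μ {x : ℚ_[p] | ‖x‖ ≤ 1} = 1) (c : ℚ_[p]) (hc : (p : ℝ) ≤ ‖c‖) :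
    ∫ x in {x : ℚ_[p] | ‖x‖ = 1}, (ψ (c * x) : ℂ) ∂μ
      = - ∫ x in {x : ℚ_[p] | ‖x‖ ≤ (p : ℝ)⁻¹}, (ψ (c * x) : ℂ) ∂μ := by
  obtain ⟨y, hy1, hy2⟩ := exists_norm_p ψ hψ1 hψ2
  have hppos : (0 : ℝ) < p := by exact_mod_cast hp.out.pos
  have hcpos : (0 : ℝ) < ‖c‖ := lt_of_lt_of_le hppos hc
  have hcne : c ≠ 0 := by
    intro h
    rw [h, norm_zero] at hcpos
    exact lt_irrefl 0 hcpos
  have hx0 : ‖y * c⁻¹‖ ≤ 1 := by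
    rw [norm_mul, norm_inv, hy1]
    calc (p : ℝ) * ‖c‖⁻¹ ≤ (p : ℝ) * (p : ℝ)⁻¹ := by
          apply mul_le_mul_of_nonneg_left (inv_anti₀ hppos hc) (le_of_lt hppos)
      _ = 1 := mul_inv_cancel₀ (ne_of_gt hppos)
  have hψx0 : ψ (c * (y * c⁻¹)) ≠ 1 := by
    have : c * (y * c⁻¹) = y := by field_simp
    rw [this]
    exact hy2
  have hzero : ∫ x in {x : ℚ_[p] | ‖x‖ ≤ (1 : ℝ)}, (ψ (c * x) : ℂ) ∂μ = 0 :=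
    integral_ball_zero μ ψ c 1 (y * c⁻¹) hx0 hψx0
  have hdiff := integral_diff (s := {x : ℚ_[p] | ‖x‖ ≤ (1:ℝ)})
    (t := {x : ℚ_[p] | ‖x‖ ≤ (p : ℝ)⁻¹}) (f := fun x => (ψ (c * x) : ℂ)) (μ := μ)
    (ball_meas _) (integrableOn_ball μ ψ hψ1 c 1)
    (fun x hx => le_trans hx pinv_le_one)
  rw [← sphere_eq_diff] at hdiff
  rw [hdiff, hzero, zero_sub]

lemma integral_sphere_big (hψ1 : ∀ x : ℚ_[p], ‖x‖ ≤ 1 → ψ x = 1)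
    (hψ2 : ∃ x : ℚ_[p], ‖x‖ ≤ p ∧ ψ x ≠ 1)
    (hμ : μ {x : ℚ_[p] | ‖x‖ ≤ 1} = 1) (c : ℚ_[p]) (hc : (p : ℝ) ^ 2 ≤ ‖c‖) :
    ∫ x in {x : ℚ_[p] | ‖x‖ = 1}, (ψ (c * x) : ℂ) ∂μ = 0 := by
  have hppos : (0 : ℝ) < p := by exact_mod_cast hp.out.pos
  have hp1 : (1 : ℝ) ≤ p := by exact_mod_cast hp.out.one_le
  have hc' : (p : ℝ) ≤ ‖c‖ := le_trans (by nlinarith) hc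
  rw [integral_sphere_nontriv μ ψ hψ1 hψ2 hμ c hc']
  obtain ⟨y, hy1, hy2⟩ := exists_norm_p ψ hψ1 hψ2
  have hcpos : (0 : ℝ) < ‖c‖ := lt_of_lt_of_le hppos hc'
  have hcne : c ≠ 0 := fun h => by simp [h] at hcpos
  have hx0 : ‖y * c⁻¹‖ ≤ (p : ℝ)⁻¹ := by
    rw [norm_mul, norm_inv, hy1]
    rw [← div_eq_mul_inv, div_le_iff₀ hcpos]
    calc (p : ℝ) = (p : ℝ)⁻¹ * (p : ℝ) ^ 2 := by field_simp
      _ ≤ (p : ℝ)⁻¹ * ‖c‖ := by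
          apply mul_le_mul_of_nonneg_left hc (by positivity)
  have hψx0 : ψ (c * (y * c⁻¹)) ≠ 1 := by
    have : c * (y * c⁻¹) = y := by field_simp
    rw [this]
    exact hy2
  rw [integral_ball_zero μ ψ c _ (y * c⁻¹) hx0 hψx0, neg_zero]

lemma I_prod (c1 c2 : ℚ_[p]) :
    ∫ z in {z : ℚ_[p] × ℚ_[p] | ‖z.1‖ = 1 ∧ ‖z.2‖ = 1},
        (ψ (c1 * z.1 + c2 * z.2) : ℂ) ∂(μ.prod μ)
      = (∫ x in {x : ℚ_[p] | ‖x‖ = 1}, (ψ (c1 * x) : ℂ) ∂μ)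
        * ∫ x in {x : ℚ_[p] | ‖x‖ = 1}, (ψ (c2 * x) : ℂ) ∂μ := by
  have hset : {z : ℚ_[p] × ℚ_[p] | ‖z.1‖ = 1 ∧ ‖z.2‖ = 1}
      = {x : ℚ_[p] | ‖x‖ = 1} ×ˢ {x : ℚ_[p] | ‖x‖ = 1} := by
    ext z
    simp [Set.mem_prod]
  have hfun : ∀ z : ℚ_[p] × ℚ_[p], (ψ (c1 * z.1 + c2 * z.2) : ℂ)
      = ψ (c1 * z.1) * ψ (c2 * z.2) := fun z => AddChar.map_add_eq_mul ψ _ _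
  rw [hset]
  simp_rw [hfun]
  exact setIntegral_prod_mul (fun x => (ψ (c1 * x) : ℂ)) (fun y => (ψ (c2 * y) : ℂ)) _ _

end S1aux2


open S1aux2

/-- For p ∤ a₁, the sum
S₁(s;a) = Σ_{j₁≥1, j₁>2j₂, j₂≥0} p^{(j₁+j₂)(1−s)} I(j₁,j₂)
        + Σ_{j₁≥1, j₂<0} p^{−j₁s+j₁+j₂} I(j₁,j₂),
with I(j₁,j₂) = ∫_{U_p²} ψ(a₁x/p^{j₁} + a₂y/p^{j₂}) dx dy, equals −p^{−s}
for Re(s) > 3/2. -/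
theorem S1_eval (p : ℕ) [Fact p.Prime]
    [MeasurableSpace ℚ_[p]] [BorelSpace ℚ_[p]]
    (μ : Measure ℚ_[p]) [μ.IsAddHaarMeasure] (hμ : μ {x : ℚ_[p] | ‖x‖ ≤ 1} = 1)
    (ψ : AddChar ℚ_[p] ℂ) (hψ1 : ∀ x : ℚ_[p], ‖x‖ ≤ 1 → ψ x = 1)
    (hψ2 : ∃ x : ℚ_[p], ‖x‖ ≤ p ∧ ψ x ≠ 1)
    (a1 a2 : ℤ) (ha1 : ¬ (p : ℤ) ∣ a1) (s : ℂ) (hs : 3 / 2 < s.re)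
    (I : ℤ → ℤ → ℂ)
    (hI : ∀ j1 j2 : ℤ, I j1 j2 =
      ∫ z in {z : ℚ_[p] × ℚ_[p] | ‖z.1‖ = 1 ∧ ‖z.2‖ = 1},
        ψ ((a1 : ℚ_[p]) * z.1 / (p : ℚ_[p]) ^ j1
            + (a2 : ℚ_[p]) * z.2 / (p : ℚ_[p]) ^ j2) ∂(μ.prod μ)) :
    (∑' q : {q : ℤ × ℤ // 1 ≤ q.1 ∧ 2 * q.2 < q.1 ∧ 0 ≤ q.2},
        (p : ℂ) ^ (((q.1.1 + q.1.2 : ℤ) : ℂ) * (1 - s)) * I q.1.1 q.1.2)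
      + (∑' q : {q : ℤ × ℤ // 1 ≤ q.1 ∧ q.2 < 0},
        (p : ℂ) ^ (-((q.1.1 : ℤ) : ℂ) * s + ((q.1.1 : ℤ) : ℂ) + ((q.1.2 : ℤ) : ℂ))
          * I q.1.1 q.1.2)
      = -(p : ℂ) ^ (-s) := by
  have hp' : Fact p.Prime := ‹_›
  have hppos : (0 : ℝ) < p := by exact_mod_cast hp'.out.pos
  have hp0C : (p : ℂ) ≠ 0 := Nat.cast_ne_zero.2 hp'.out.pos.ne'
  have hp1C : (p : ℂ) ≠ 1 := by
    intro h
    have : p = 1 := by exact_mod_cast h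
    exact hp'.out.one_lt.ne' this
  have hinvne : (1 : ℂ) - (p : ℂ)⁻¹ ≠ 0 :=
    sub_ne_zero.2 fun h => hp1C (inv_eq_one.1 h.symm)
  set c0 : ℂ := -(p : ℂ)⁻¹ * (1 - (p : ℂ)⁻¹) with hc0
  have hc0ne : c0 ≠ 0 :=
    mul_ne_zero (neg_ne_zero.2 (inv_ne_zero hp0C)) hinvne
  have ha1norm : ‖(a1 : ℚ_[p])‖ = 1 :=
    le_antisymm (Padic.norm_int_le_one a1)
      (not_lt.1 fun h => ha1 ((Padic.norm_intCast_lt_one_iff (k := a1)).1 h))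
  have hnormc1 : ∀ j : ℤ, ‖(a1 : ℚ_[p]) / (p : ℚ_[p]) ^ j‖ = (p : ℝ) ^ j := by
    intro j
    rw [norm_div, ha1norm, Padic.norm_p_zpow, zpow_neg]
    simp
  have hIfac : ∀ j1 j2 : ℤ, I j1 j2 =
      (∫ x in {x : ℚ_[p] | ‖x‖ = 1}, (ψ ((a1 : ℚ_[p]) / (p : ℚ_[p]) ^ j1 * x) : ℂ) ∂μ)
        * ∫ x in {x : ℚ_[p] | ‖x‖ = 1}, (ψ ((a2 : ℚ_[p]) / (p : ℚ_[p]) ^ j2 * x) : ℂ) ∂μ := by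
    intro j1 j2
    rw [hI]
    have harg : ∀ z : ℚ_[p] × ℚ_[p],
        (a1 : ℚ_[p]) * z.1 / (p : ℚ_[p]) ^ j1 + (a2 : ℚ_[p]) * z.2 / (p : ℚ_[p]) ^ j2
          = (a1 : ℚ_[p]) / (p : ℚ_[p]) ^ j1 * z.1 + (a2 : ℚ_[p]) / (p : ℚ_[p]) ^ j2 * z.2 := by
      intro z; ring
    simp_rw [harg]
    exact I_prod μ ψ _ _
  have hI1 : ∀ j2 : ℤ, j2 ≤ 0 → I 1 j2 = c0 := by
    intro j2 hj2
    rw [hIfac]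
    have h1 : ∫ x in {x : ℚ_[p] | ‖x‖ = 1},
        (ψ ((a1 : ℚ_[p]) / (p : ℚ_[p]) ^ (1 : ℤ) * x) : ℂ) ∂μ = -(p : ℂ)⁻¹ := by
      have hcn : ‖(a1 : ℚ_[p]) / (p : ℚ_[p]) ^ (1 : ℤ)‖ = p := by
        rw [hnormc1 1, zpow_one]
      rw [integral_sphere_nontriv μ ψ hψ1 hψ2 hμ _ (le_of_eq hcn.symm),
        integral_ball_const μ ψ hψ1 hμ _ hcn]
    have h2 : ∫ x in {x : ℚ_[p] | ‖x‖ = 1},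
        (ψ ((a2 : ℚ_[p]) / (p : ℚ_[p]) ^ j2 * x) : ℂ) ∂μ = 1 - (p : ℂ)⁻¹ := by
      apply integral_sphere_small μ ψ hψ1 hμ
      rw [norm_div, Padic.norm_p_zpow]
      have hden : (1 : ℝ) ≤ (p : ℝ) ^ (-j2) :=
        one_le_zpow₀ (by exact_mod_cast hp'.out.one_le) (by omega)
      have hnum : ‖(a2 : ℚ_[p])‖ ≤ 1 := Padic.norm_int_le_one a2
      rw [div_le_one (lt_of_lt_of_le one_pos hden)]
      exact le_trans hnum hden
    rw [h1, h2, hc0]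
  have hI0 : ∀ j1 j2 : ℤ, 2 ≤ j1 → I j1 j2 = 0 := by
    intro j1 j2 h
    rw [hIfac]
    have h1 : ∫ x in {x : ℚ_[p] | ‖x‖ = 1},
        (ψ ((a1 : ℚ_[p]) / (p : ℚ_[p]) ^ j1 * x) : ℂ) ∂μ = 0 := by
      apply integral_sphere_big μ ψ hψ1 hψ2 hμ
      rw [hnormc1 j1]
      calc (p : ℝ) ^ 2 = (p : ℝ) ^ (2 : ℤ) := by norm_cast
        _ ≤ (p : ℝ) ^ j1 := zpow_le_zpow_right₀ (by exact_mod_cast hp'.out.one_le) h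
    rw [h1, zero_mul]
  -- first sum
  have hT1 : (∑' q : {q : ℤ × ℤ // 1 ≤ q.1 ∧ 2 * q.2 < q.1 ∧ 0 ≤ q.2},
        (p : ℂ) ^ (((q.1.1 + q.1.2 : ℤ) : ℂ) * (1 - s)) * I q.1.1 q.1.2)
      = (p : ℂ) ^ ((1 : ℂ) - s) * c0 := by
    have hsingle := tsum_eq_single (L := SummationFilter.unconditional _)
      (f := fun q : {q : ℤ × ℤ // 1 ≤ q.1 ∧ 2 * q.2 < q.1 ∧ 0 ≤ q.2} =>
        (p : ℂ) ^ (((q.1.1 + q.1.2 : ℤ) : ℂ) * (1 - s)) * I q.1.1 q.1.2)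
      ⟨(1, 0), by norm_num⟩ ?_
    · rw [hsingle]
      have : (((1 : ℤ) + (0 : ℤ) : ℤ) : ℂ) = 1 := by norm_num
      simp only []
      rw [show ((((1:ℤ), (0:ℤ)).1 + ((1:ℤ), (0:ℤ)).2 : ℤ) : ℂ) = 1 by norm_num]
      rw [hI1 0 le_rfl, one_mul]
    · rintro ⟨⟨j1, j2⟩, h1, h2, h3⟩ hb
      simp only []
      by_cases hj1 : 2 ≤ j1
      · rw [hI0 j1 j2 hj1, mul_zero]
      · exfalso
        apply hb
        have : j1 = 1 ∧ j2 = 0 := by omega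
        exact Subtype.ext (Prod.ext (by simp [this.1]) (by simp [this.2]))
  -- second sum
  set g : ℕ → ℂ := fun n => ((p : ℂ) ^ ((1 : ℂ) - s) * c0 * (p : ℂ)⁻¹) * ((p : ℂ)⁻¹) ^ n
    with hg
  have hcpowne : (p : ℂ) ^ ((1 : ℂ) - s) ≠ 0 := by
    simp [Complex.cpow_eq_zero_iff, hp0C]
  have hgne : ∀ n, g n ≠ 0 := fun n =>
    mul_ne_zero (mul_ne_zero (mul_ne_zero hcpowne hc0ne) (inv_ne_zero hp0C))
      (pow_ne_zero _ (inv_ne_zero hp0C))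
  have hfval : ∀ n : ℕ,
      (p : ℂ) ^ (-(((1:ℤ) : ℤ) : ℂ) * s + (((1:ℤ) : ℤ) : ℂ) + (((-(n:ℤ)-1 : ℤ) : ℤ) : ℂ))
        * I 1 (-(n:ℤ)-1) = g n := by
    intro n
    rw [hI1 _ (by omega), hg]
    have hexp : -(((1:ℤ) : ℤ) : ℂ) * s + (((1:ℤ) : ℤ) : ℂ) + (((-(n:ℤ)-1 : ℤ) : ℤ) : ℂ)
        = ((1 : ℂ) - s) + ((-(n:ℤ)-1 : ℤ) : ℂ) := by push_cast; ring
    rw [hexp, Complex.cpow_add _ _ hp0C, Complex.cpow_intCast]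
    have hz : (p : ℂ) ^ (-(n:ℤ)-1) = ((p : ℂ)⁻¹) ^ n * (p : ℂ)⁻¹ := by
      have h1 : -(n:ℤ)-1 = -((n+1 : ℕ) : ℤ) := by push_cast; ring
      rw [h1, zpow_neg, zpow_natCast, pow_succ, mul_inv, ← inv_pow]
    rw [hz]
    ring
  have hT2 : (∑' q : {q : ℤ × ℤ // 1 ≤ q.1 ∧ q.2 < 0},
        (p : ℂ) ^ (-((q.1.1 : ℤ) : ℂ) * s + ((q.1.1 : ℤ) : ℂ) + ((q.1.2 : ℤ) : ℂ))
          * I q.1.1 q.1.2)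
      = (p : ℂ) ^ ((1 : ℂ) - s) * c0 * (p : ℂ)⁻¹ * (1 - (p : ℂ)⁻¹)⁻¹ := by
    have hbij := tsum_eq_tsum_of_ne_zero_bij
      (f := fun q : {q : ℤ × ℤ // 1 ≤ q.1 ∧ q.2 < 0} =>
        (p : ℂ) ^ (-((q.1.1 : ℤ) : ℂ) * s + ((q.1.1 : ℤ) : ℂ) + ((q.1.2 : ℤ) : ℂ))
          * I q.1.1 q.1.2)
      (g := g)
      (fun n => ⟨(1, -(n.1 : ℤ) - 1), ⟨le_refl 1, by omega⟩⟩) ?_ ?_ ?_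
    · rw [hbij, hg]
      rw [tsum_mul_left, tsum_geometric_of_norm_lt_one (by
        rw [norm_inv, Complex.norm_natCast]
        rw [inv_lt_one_iff₀]
        right
        exact_mod_cast hp'.out.one_lt)]
    · intro n m hnm
      have := congrArg (fun q => q.1.2) hnm
      simp only at this
      exact Subtype.ext (by omega)
    · rintro ⟨⟨j1, j2⟩, h1, h2⟩ hq
      simp only [Function.mem_support] at hq
      have hj1 : j1 = 1 := by
        by_contra h
        exact hq (by rw [hI0 j1 j2 (by omega), mul_zero])
      refine ⟨⟨(-j2 - 1).toNat, hgne _⟩, ?_⟩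
      exact Subtype.ext (Prod.ext (by simp [hj1]) (by simp; omega))
    · rintro ⟨n, hn⟩
      simpa using hfval n
  rw [hT1, hT2]
  have hps : (p : ℂ) ^ ((1 : ℂ) - s) = (p : ℂ) * (p : ℂ) ^ (-s) := by
    rw [show (1 : ℂ) - s = 1 + (-s) by ring, Complex.cpow_add _ _ hp0C, Complex.cpow_one]
  rw [hps]
  have key : (p : ℂ) * c0 + (p : ℂ) * c0 * (p : ℂ)⁻¹ * (1 - (p : ℂ)⁻¹)⁻¹ = -1 := by
    have hpp : (p : ℂ) * (p : ℂ)⁻¹ = 1 := mul_inv_cancel₀ hp0C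
    have hqq : ((1 : ℂ) - (p : ℂ)⁻¹) * ((1 : ℂ) - (p : ℂ)⁻¹)⁻¹ = 1 := mul_inv_cancel₀ hinvne
    rw [hc0]
    linear_combination (-(1 - (p : ℂ)⁻¹) - (p : ℂ)⁻¹ * (1 - (p : ℂ)⁻¹)⁻¹ * (1 - (p : ℂ)⁻¹)) * hpp
      + (-(p : ℂ)⁻¹) * hqq
  linear_combination ((p : ℂ) ^ (-s)) * key
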